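/- Let (Ω, 𝒜, P) be a finite probability space with filtration (F_t)_{t=0..T}, F_0 trivial, and let G be a non-constant F_T-measurable random variable taking finitely many values. Then there is no positive (P, G)-martingale (M_t)_{t=0..T} with M_0 = 1 such that for every (P, F)-martingale X, the process (X_t M_t)_{t=0..T} is a (P, G)-martingale, where G_t = F_t ∨ σ(G). (That is, the enlarged model admits no deflator on the full horizon and hence is not arbitrage-free on {0,...,T}.) -/

import Mathlib

open MeasureTheory Set

lemma integrable_of_fintype_aux {Ω : Type*} [Fintype Ω] {mΩ : MeasurableSpace Ω}
    (μ : Measure Ω) [IsFiniteMeasure μ] {f : Ω → ℝ} (hf : StronglyMeasurable f) :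
    Integrable f μ := by
  refine ⟨hf.aestronglyMeasurable, ?_⟩
  refine HasFiniteIntegral.of_bounded
    (C := ((Finset.univ.sup fun ω => ‖f ω‖₊ : NNReal) : ℝ)) ?_
  filter_upwards with ω
  exact_mod_cast Finset.le_sup (f := fun ω => ‖f ω‖₊) (Finset.mem_univ ω)

/-- No deflator on the full horizon: if `G` is a non-constant `ℱ T`-measurable random
variable, there is no positive `(P, 𝒢)`-martingale `M` on `{0,...,T}` with `M 0 = 1`
such that `X·M` is a `(P, 𝒢)`-martingale for every `(P, ℱ)`-martingale `X`. -/
theorem stmt4 {Ω : Type*} [Fintype Ω] {mΩ : MeasurableSpace Ω}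
    (μ : Measure Ω) [IsProbabilityMeasure μ]
    (T : ℕ) (ℱ 𝒢 : Filtration ℕ mΩ) (hF0 : ℱ 0 = ⊥)
    (G : Ω → ℝ) (hG : StronglyMeasurable[ℱ T] G)
    (hGnc : ¬ ∃ c : ℝ, G =ᵐ[μ] fun _ => c)
    (h𝒢 : ∀ s, (𝒢 s : MeasurableSpace Ω) =
      (ℱ s : MeasurableSpace Ω) ⊔ MeasurableSpace.comap G inferInstance) :
    ¬ ∃ M : ℕ → Ω → ℝ,
      (∀ s ≤ T, ∀ ω, 0 < M s ω) ∧ (∀ ω, M 0 ω = 1) ∧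
      ((∀ s ≤ T, StronglyMeasurable[𝒢 s] (M s)) ∧
        ∀ s t, s ≤ t → t ≤ T → μ[M t | 𝒢 s] =ᵐ[μ] M s) ∧
      (∀ X : ℕ → Ω → ℝ,
        ((∀ s ≤ T, StronglyMeasurable[ℱ s] (X s)) ∧
          ∀ s t, s ≤ t → t ≤ T → μ[X t | ℱ s] =ᵐ[μ] X s) →
        ((∀ s ≤ T, StronglyMeasurable[𝒢 s] (fun ω => X s ω * M s ω)) ∧
          ∀ s t, s ≤ t → t ≤ T →
            μ[(fun ω => X t ω * M t ω) | 𝒢 s] =ᵐ[μ] fun ω => X s ω * M s ω)) := by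
  rintro ⟨M, hMpos, hM0, ⟨hMadapt, hMmart⟩, hdefl⟩
  -- G is 𝒢 0-measurable
  have hGmG0 : StronglyMeasurable[𝒢 0] G := by
    have h1 : MeasurableSpace.comap G inferInstance ≤ (𝒢 0 : MeasurableSpace Ω) :=
      (h𝒢 0) ▸ le_sup_right
    exact ((Measurable.of_comap_le le_rfl).mono h1 le_rfl).stronglyMeasurable
  -- integrability facts
  have hGint : Integrable G μ :=
    integrable_of_fintype_aux μ (hG.mono (ℱ.le T))
  have hMTint : Integrable (M T) μ :=
    integrable_of_fintype_aux μ ((hMadapt T le_rfl).mono (𝒢.le T))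
  have hGMint : Integrable (G * M T) μ :=
    integrable_of_fintype_aux μ
      ((hG.mono (ℱ.le T)).mul ((hMadapt T le_rfl).mono (𝒢.le T)))
  -- the F-martingale X t = E[G | ℱ t]
  set X : ℕ → Ω → ℝ := fun t => μ[G | ℱ t] with hXdef
  have hXmart : (∀ s ≤ T, StronglyMeasurable[ℱ s] (X s)) ∧
      ∀ s t, s ≤ t → t ≤ T → μ[X t | ℱ s] =ᵐ[μ] X s := by
    constructor
    · intro s _; exact stronglyMeasurable_condExp
    · intro s t hst _
      exact condExp_condExp_of_le (ℱ.mono hst) (ℱ.le t)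
  have hXM := (hdefl X hXmart).2 0 T (Nat.zero_le T) le_rfl
  -- X T = G
  have hXT : X T = G := condExp_of_stronglyMeasurable (ℱ.le T) hG hGint
  -- pull-out
  have hpull : μ[G * M T | 𝒢 0] =ᵐ[μ] G * μ[M T | 𝒢 0] :=
    condExp_mul_of_stronglyMeasurable_left hGmG0 hGMint hMTint
  have hM : μ[M T | 𝒢 0] =ᵐ[μ] M 0 := hMmart 0 T (Nat.zero_le T) le_rfl
  -- combine
  have key : G =ᵐ[μ] fun ω => X 0 ω * M 0 ω := by
    have h1 : (fun ω => X T ω * M T ω) = G * M T := by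
      funext ω; simp [hXT, Pi.mul_apply]
    have h2 : G * μ[M T | 𝒢 0] =ᵐ[μ] G := by
      filter_upwards [hM] with ω hω
      simp [Pi.mul_apply, hω, hM0 ω]
    calc G =ᵐ[μ] G * μ[M T | 𝒢 0] := h2.symm
      _ =ᵐ[μ] μ[G * M T | 𝒢 0] := hpull.symm
      _ = μ[(fun ω => X T ω * M T ω) | 𝒢 0] := by rw [h1]
      _ =ᵐ[μ] fun ω => X 0 ω * M 0 ω := hXM
  refine hGnc ⟨(∫ x, G x ∂μ), ?_⟩
  have hX0 : X 0 = fun _ => ∫ x, G x ∂μ := by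
    rw [hXdef]; simp only [hF0]; exact condExp_bot G
  filter_upwards [key] with ω hω
  rw [hω, hX0, hM0 ω, mul_one]
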